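/- For every integer x ≥ 1, the three explicit sums S₁(x) = Σ_{j=0}^{x−1} ((2j−1)!!·x!·(2x−1)!!·(2x−2j)·(2x−1)!)/((4x−1)!!·j!·(x−j)!·(2x−2j−1)!!·(2j)!), S₂(x) = Σ_{j=0}^{x−1} ((2j−1)!!·(x−1)!·(2x−1)!!·(2x−2j−1)·(2x−2)!)/((4x−3)!!·j!·(x−j−1)!·(2x−2j−1)!!·(2j)!), and S₃(x) = Σ_{j=0}^{x−1} ((2j+1)!!·(x−1)!·(2x−3)!!·(2x−2j−2)·(2x−1)!)/((4x−3)!!·j!·(x−j−1)!·(2x−2j−3)!!·(2j+2)!) satisfy (4x−1)·S₁(x) − (2x−1)·(S₂(x) + S₃(x)) = 1, as an identity in ℚ. -/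

import Mathlib

/-- Double factorial `n‼`; with natural subtraction as argument this also
implements the convention `(-1)‼ = 0‼ = 1`. -/
def dfact : ℕ → ℕ
  | 0 => 1
  | 1 => 1
  | n + 2 => (n + 2) * dfact n

open Nat

/-- The closed-form value of `P (2x) (2x)`. -/
noncomputable def S₁ (x : ℕ) : ℚ :=
  ∑ j ∈ Finset.range x,
    ((dfact (2 * j - 1) : ℚ) * (x ! : ℚ) * (dfact (2 * x - 1) : ℚ) *
        ((2 * x - 2 * j : ℕ) : ℚ) * ((2 * x - 1) ! : ℚ)) /
      ((dfact (4 * x - 1) : ℚ) * (j ! : ℚ) * ((x - j) ! : ℚ) *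
        (dfact (2 * x - 2 * j - 1) : ℚ) * ((2 * j) ! : ℚ))

/-- The closed-form value of `P (2x-1) (2x-1)`. -/
noncomputable def S₂ (x : ℕ) : ℚ :=
  ∑ j ∈ Finset.range x,
    ((dfact (2 * j - 1) : ℚ) * ((x - 1) ! : ℚ) * (dfact (2 * x - 1) : ℚ) *
        ((2 * x - 2 * j - 1 : ℕ) : ℚ) * ((2 * x - 2) ! : ℚ)) /
      ((dfact (4 * x - 3) : ℚ) * (j ! : ℚ) * ((x - j - 1) ! : ℚ) *
        (dfact (2 * x - 2 * j - 1) : ℚ) * ((2 * j) ! : ℚ))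

/-- The closed-form value of `P (2x-2) (2x)`. -/
noncomputable def S₃ (x : ℕ) : ℚ :=
  ∑ j ∈ Finset.range x,
    ((dfact (2 * j + 1) : ℚ) * ((x - 1) ! : ℚ) * (dfact (2 * x - 3) : ℚ) *
        ((2 * x - 2 * j - 2 : ℕ) : ℚ) * ((2 * x - 1) ! : ℚ)) /
      ((dfact (4 * x - 3) : ℚ) * (j ! : ℚ) * ((x - j - 1) ! : ℚ) *
        (dfact (2 * x - 2 * j - 3) : ℚ) * ((2 * j + 2) ! : ℚ))

open Finset Polynomial

lemma dfact_pos (n : ℕ) : 0 < dfact n := by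
  induction n using Nat.strong_induction_on with
  | _ n ih =>
    match n with
    | 0 => simp [dfact]
    | 1 => simp [dfact]
    | n + 2 => rw [dfact]; exact Nat.mul_pos (by omega) (ih n (by omega))

lemma dfact_even (m : ℕ) : dfact (2 * m) = 2 ^ m * m ! := by
  induction m with
  | zero => simp [dfact]
  | succ m ih =>
    have h : 2 * (m + 1) = 2 * m + 2 := by ring
    rw [h, dfact, ih, Nat.factorial_succ]
    ring

lemma dfact_odd (m : ℕ) : dfact (2 * m + 1) * (2 ^ m * m !) = (2 * m + 1)! := by
  induction m with
  | zero => simp [dfact]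
  | succ m ih =>
    have h : 2 * (m + 1) + 1 = (2 * m + 1) + 2 := by ring
    rw [h, dfact]
    have e1 : (2*m+1+1)! = (2*m+1+1) * (2*m+1)! := Nat.factorial_succ _
    have e2 : (2*m+1+1+1)! = (2*m+1+1+1) * (2*m+1+1)! := Nat.factorial_succ _
    have h2 : (2 * m + 1 + 2)! = (2 * m + 3) * ((2 * m + 2) * (2 * m + 1)!) := by
      rw [show 2*m+1+2 = 2*m+1+1+1 by ring, e2, e1]
    rw [h2, ← ih, Nat.factorial_succ]
    ring

lemma dfact_oddsub (j : ℕ) : dfact (2 * j - 1) * (2 ^ j * j !) = (2 * j)! := by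
  cases j with
  | zero => simp [dfact]
  | succ m =>
    have h : 2 * (m + 1) - 1 = 2 * m + 1 := by omega
    rw [h]
    have h2 : (2 * (m + 1))! = (2 * m + 2) * (2 * m + 1)! := by
      rw [show 2*(m+1) = (2*m+1)+1 by ring, Nat.factorial_succ]

    rw [h2, ← dfact_odd m, Nat.factorial_succ]
    ring

lemma coeff_X_add_two_pow (m s : ℕ) :
    ((X + C 2 : ℕ[X]) ^ m).coeff s = m.choose s * 2 ^ (m - s) := by
  rw [add_pow]
  rw [finset_sum_coeff]
  have hterm : ∀ i ∈ range (m + 1),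
      (X ^ i * (C 2 : ℕ[X]) ^ (m - i) * (m.choose i : ℕ[X])).coeff s
        = if s = i then m.choose s * 2 ^ (m - s) else 0 := by
    intro i hi
    have e : (X ^ i * (C 2 : ℕ[X]) ^ (m - i) * (m.choose i : ℕ[X]))
        = C (2 ^ (m - i) * m.choose i) * X ^ i := by
      rw [← C_eq_natCast, ← C_pow, C_mul]
      simp only [Nat.cast_id]
      ring
    rw [e, coeff_C_mul, coeff_X_pow]
    by_cases h : s = i
    · subst h; simp [mul_comm]
    · simp [h]
  rw [Finset.sum_congr rfl hterm]
  by_cases hs : s ≤ m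
  · rw [Finset.sum_ite_eq (range (m+1)) s (fun _ => m.choose s * 2 ^ (m - s))]
    simp [Nat.lt_succ_of_le hs]
  · push_neg at hs
    simp only [Finset.sum_ite_eq, mem_range]
    rw [if_neg (by omega)]
    rw [Nat.choose_eq_zero_of_lt (by omega)]
    simp

lemma key (n t : ℕ) (h : n ≤ t) :
    ∑ m ∈ range (n + 1), n.choose m * m.choose (t - m) * 2 ^ (2 * m - t)
      = (2 * n).choose t := by
  have h1 : ((1 + X : ℕ[X])) ^ (2 * n)
      = ∑ m ∈ range (n + 1), (X * (X + C 2)) ^ m * 1 ^ (n - m) * (n.choose m : ℕ[X]) := by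
    rw [pow_mul, show ((1 + X : ℕ[X])) ^ 2 = X * (X + C 2) + 1 by
      have : (C 2 : ℕ[X]) = 2 := by simp
      rw [this]; ring, add_pow]
  have h2 := congrArg (fun p => Polynomial.coeff p t) h1
  rw [coeff_one_add_X_pow, Nat.cast_id, finset_sum_coeff] at h2
  rw [h2]
  apply Finset.sum_congr rfl
  intro m hm
  have hmt : m ≤ t := le_trans (by simp at hm; omega) h
  have e1 : (X * (X + C 2) : ℕ[X]) ^ m * 1 ^ (n - m) * (n.choose m : ℕ[X])
      = C (n.choose m) * (X ^ m * (X + C 2) ^ m) := by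
    rw [← C_eq_natCast, mul_pow]
    simp only [Nat.cast_id]
    ring
  rw [e1, coeff_C_mul]
  rw [show t = (t - m) + m by omega, coeff_X_pow_mul, coeff_X_add_two_pow]
  have e2 : m - (t - m) = 2 * m - ((t - m) + m) := by omega
  rw [e2, show t - m + m - m = t - m from by omega, mul_assoc]

lemma idA (n : ℕ) :
    ∑ j ∈ range (n + 1), n.choose j * (n - j).choose j * 2 ^ (n - 2 * j)
      = (2 * n).choose n := by
  rw [← key n n le_rfl,
    ← Finset.sum_range_reflect (fun m => n.choose m * m.choose (n - m) * 2 ^ (2 * m - n)) (n + 1)]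
  apply Finset.sum_congr rfl
  intro j hj
  have hj' : j ≤ n := by simp at hj; omega
  rw [show n + 1 - 1 - j = n - j from by omega, Nat.choose_symm hj',
    show n - (n - j) = j from by omega, show 2 * (n - j) - n = n - 2 * j from by omega]

lemma idB (n : ℕ) :
    ∑ j ∈ range (n + 1), n.choose j * (n - j).choose (j + 1) * 2 ^ (n - (2 * j + 1))
      = (2 * n).choose (n + 1) := by
  rw [← key n (n + 1) (by omega),
    ← Finset.sum_range_reflect (fun m => n.choose m * m.choose (n + 1 - m) * 2 ^ (2 * m - (n + 1))) (n + 1)]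
  apply Finset.sum_congr rfl
  intro j hj
  have hj' : j ≤ n := by simp at hj; omega
  rw [show n + 1 - 1 - j = n - j from by omega, Nat.choose_symm hj',
    show n + 1 - (n - j) = j + 1 from by omega,
    show 2 * (n - j) - (n + 1) = n - (2 * j + 1) from by omega]

lemma cast_dfact_odd (m : ℕ) : (dfact (2 * m + 1) : ℚ) = (2 * m + 1)! / (2 ^ m * m !) := by
  rw [eq_div_iff (by positivity)]
  exact_mod_cast congrArg (Nat.cast (R := ℚ)) (dfact_odd m)

lemma cast_dfact_oddsub (j : ℕ) : (dfact (2 * j - 1) : ℚ) = (2 * j)! / (2 ^ j * j !) := by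
  rw [eq_div_iff (by positivity)]
  exact_mod_cast congrArg (Nat.cast (R := ℚ)) (dfact_oddsub j)

lemma S1_eq (x : ℕ) (hx : 1 ≤ x) :
    S₁ x = ((2 * x)! * ((4 * x - 2).choose (2 * x - 1)) : ℚ)
      / (2 ^ (2 * x - 1) * dfact (4 * x - 1)) := by
  rw [S₁]
  have hterm : ∀ j ∈ range x,
      ((dfact (2 * j - 1) : ℚ) * (x ! : ℚ) * (dfact (2 * x - 1) : ℚ) *
        ((2 * x - 2 * j : ℕ) : ℚ) * ((2 * x - 1) ! : ℚ)) /
      ((dfact (4 * x - 1) : ℚ) * (j ! : ℚ) * ((x - j) ! : ℚ) *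
        (dfact (2 * x - 2 * j - 1) : ℚ) * ((2 * j) ! : ℚ))
      = ((2 * x)! : ℚ) *
          (((2 * x - 1).choose j * (2 * x - 1 - j).choose j * 2 ^ (2 * x - 1 - 2 * j) : ℕ) : ℚ)
        / (2 ^ (2 * x - 1) * dfact (4 * x - 1)) := by
    intro j hj
    obtain ⟨d, hd⟩ := Nat.exists_eq_add_of_lt (mem_range.mp hj)
    subst hd
    rw [show 2 * (j + d + 1) - 1 - j = j + 2 * d + 1 from by omega,
      show 2 * (j + d + 1) - 1 - 2 * j = 2 * d + 1 from by omega,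
      show 2 * (j + d + 1) - 2 * j - 1 = 2 * d + 1 from by omega,
      show 2 * (j + d + 1) - 2 * j = 2 * d + 2 from by omega,
      show 2 * (j + d + 1) - 1 = 2 * (j + d) + 1 from by omega,
      show j + d + 1 - j = d + 1 from by omega,
      show 2 * (j + d + 1) = 2 * (j + d) + 1 + 1 from by omega]
    rw [cast_dfact_oddsub j, cast_dfact_odd (j + d), cast_dfact_odd d]
    rw [Nat.cast_mul, Nat.cast_mul,
      Nat.cast_choose ℚ (show j ≤ 2 * (j + d) + 1 from by omega),
      Nat.cast_choose ℚ (show j ≤ j + 2 * d + 1 from by omega),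
      show 2 * (j + d) + 1 - j = j + 2 * d + 1 from by omega,
      show j + 2 * d + 1 - j = 2 * d + 1 from by omega]
    rw [Nat.factorial_succ (2 * (j + d) + 1), Nat.factorial_succ (j + d),
      Nat.factorial_succ d]
    have h1 : ((2 * (j + d) + 1)! : ℚ) ≠ 0 := Nat.cast_ne_zero.2 (Nat.factorial_ne_zero _)
    have h2 : ((j + d)! : ℚ) ≠ 0 := Nat.cast_ne_zero.2 (Nat.factorial_ne_zero _)
    have h3 : ((2 * j)! : ℚ) ≠ 0 := Nat.cast_ne_zero.2 (Nat.factorial_ne_zero _)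
    have h4 : ((2 * d + 1)! : ℚ) ≠ 0 := Nat.cast_ne_zero.2 (Nat.factorial_ne_zero _)
    have h5 : ((j + 2 * d + 1)! : ℚ) ≠ 0 := Nat.cast_ne_zero.2 (Nat.factorial_ne_zero _)
    have h6 : (j ! : ℚ) ≠ 0 := Nat.cast_ne_zero.2 (Nat.factorial_ne_zero _)
    have h7 : (d ! : ℚ) ≠ 0 := Nat.cast_ne_zero.2 (Nat.factorial_ne_zero _)
    have h8 : (dfact (4 * (j + d + 1) - 1) : ℚ) ≠ 0 :=
      Nat.cast_ne_zero.2 (dfact_pos _).ne'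
    push_cast
    field_simp
    ring
  rw [Finset.sum_congr rfl hterm]
  rw [← Finset.sum_div, ← Finset.mul_sum, ← Nat.cast_sum]
  have hext : ∑ j ∈ range x, ((2 * x - 1).choose j * (2 * x - 1 - j).choose j
        * 2 ^ (2 * x - 1 - 2 * j))
      = ∑ j ∈ range (2 * x - 1 + 1), ((2 * x - 1).choose j * (2 * x - 1 - j).choose j
        * 2 ^ (2 * x - 1 - 2 * j)) := by
    apply Finset.sum_subset
    · intro a ha; simp at ha ⊢; omega
    · intro a ha ha2
      simp only [mem_range] at ha ha2
      have : 2 * x - 1 - a < a := by omega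
      rw [Nat.choose_eq_zero_of_lt this]
      simp
  rw [hext, idA (2 * x - 1), show 2 * (2 * x - 1) = 4 * x - 2 from by omega]

lemma S2_eq (x : ℕ) (hx : 1 ≤ x) :
    S₂ x = ((2 * x - 1)! * ((4 * x - 4).choose (2 * x - 2)) : ℚ)
      / (2 ^ (2 * x - 2) * dfact (4 * x - 3)) := by
  rw [S₂]
  have hterm : ∀ j ∈ range x,
      ((dfact (2 * j - 1) : ℚ) * ((x - 1) ! : ℚ) * (dfact (2 * x - 1) : ℚ) *
        ((2 * x - 2 * j - 1 : ℕ) : ℚ) * ((2 * x - 2) ! : ℚ)) /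
      ((dfact (4 * x - 3) : ℚ) * (j ! : ℚ) * ((x - j - 1) ! : ℚ) *
        (dfact (2 * x - 2 * j - 1) : ℚ) * ((2 * j) ! : ℚ))
      = ((2 * x - 1)! : ℚ) *
          (((2 * x - 2).choose j * (2 * x - 2 - j).choose j * 2 ^ (2 * x - 2 - 2 * j) : ℕ) : ℚ)
        / (2 ^ (2 * x - 2) * dfact (4 * x - 3)) := by
    intro j hj
    obtain ⟨d, hd⟩ := Nat.exists_eq_add_of_lt (mem_range.mp hj)
    subst hd
    rw [show 2 * (j + d + 1) - 2 - j = j + 2 * d from by omega,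
      show 2 * (j + d + 1) - 2 - 2 * j = 2 * d from by omega,
      show 2 * (j + d + 1) - 2 * j - 1 = 2 * d + 1 from by omega,
      show 2 * (j + d + 1) - 2 = 2 * (j + d) from by omega,
      show 2 * (j + d + 1) - 1 = 2 * (j + d) + 1 from by omega,
      show j + d + 1 - 1 = j + d from by omega,
      show j + d + 1 - j - 1 = d from by omega]
    rw [cast_dfact_oddsub j, cast_dfact_odd (j + d), cast_dfact_odd d]
    rw [Nat.cast_mul, Nat.cast_mul,
      Nat.cast_choose ℚ (show j ≤ 2 * (j + d) from by omega),
      Nat.cast_choose ℚ (show j ≤ j + 2 * d from by omega),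
      show 2 * (j + d) - j = j + 2 * d from by omega,
      show j + 2 * d - j = 2 * d from by omega]
    rw [Nat.factorial_succ (2 * (j + d)), Nat.factorial_succ (2 * d)]
    have h1 : ((2 * (j + d))! : ℚ) ≠ 0 := Nat.cast_ne_zero.2 (Nat.factorial_ne_zero _)
    have h2 : ((j + d)! : ℚ) ≠ 0 := Nat.cast_ne_zero.2 (Nat.factorial_ne_zero _)
    have h3 : ((2 * j)! : ℚ) ≠ 0 := Nat.cast_ne_zero.2 (Nat.factorial_ne_zero _)
    have h4 : ((2 * d)! : ℚ) ≠ 0 := Nat.cast_ne_zero.2 (Nat.factorial_ne_zero _)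
    have h5 : ((j + 2 * d)! : ℚ) ≠ 0 := Nat.cast_ne_zero.2 (Nat.factorial_ne_zero _)
    have h6 : (j ! : ℚ) ≠ 0 := Nat.cast_ne_zero.2 (Nat.factorial_ne_zero _)
    have h7 : (d ! : ℚ) ≠ 0 := Nat.cast_ne_zero.2 (Nat.factorial_ne_zero _)
    have h8 : (dfact (4 * (j + d + 1) - 3) : ℚ) ≠ 0 :=
      Nat.cast_ne_zero.2 (dfact_pos _).ne'
    push_cast
    field_simp
    ring
  rw [Finset.sum_congr rfl hterm]
  rw [← Finset.sum_div, ← Finset.mul_sum, ← Nat.cast_sum]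
  have hext : ∑ j ∈ range x, ((2 * x - 2).choose j * (2 * x - 2 - j).choose j
        * 2 ^ (2 * x - 2 - 2 * j))
      = ∑ j ∈ range (2 * x - 2 + 1), ((2 * x - 2).choose j * (2 * x - 2 - j).choose j
        * 2 ^ (2 * x - 2 - 2 * j)) := by
    apply Finset.sum_subset
    · intro a ha; simp at ha ⊢; omega
    · intro a ha ha2
      simp only [mem_range] at ha ha2
      have : 2 * x - 2 - a < a := by omega
      rw [Nat.choose_eq_zero_of_lt this]
      simp
  rw [hext, idA (2 * x - 2), show 2 * (2 * x - 2) = 4 * x - 4 from by omega]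

lemma S3_eq (x : ℕ) (hx : 1 ≤ x) :
    S₃ x = ((2 * x - 1)! * ((4 * x - 4).choose (2 * x - 1)) : ℚ)
      / (2 ^ (2 * x - 2) * dfact (4 * x - 3)) := by
  rw [S₃]
  have hterm : ∀ j ∈ range x,
      ((dfact (2 * j + 1) : ℚ) * ((x - 1) ! : ℚ) * (dfact (2 * x - 3) : ℚ) *
        ((2 * x - 2 * j - 2 : ℕ) : ℚ) * ((2 * x - 1) ! : ℚ)) /
      ((dfact (4 * x - 3) : ℚ) * (j ! : ℚ) * ((x - j - 1) ! : ℚ) *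
        (dfact (2 * x - 2 * j - 3) : ℚ) * ((2 * j + 2) ! : ℚ))
      = ((2 * x - 1)! : ℚ) *
          (((2 * x - 2).choose j * (2 * x - 2 - j).choose (j + 1)
            * 2 ^ (2 * x - 2 - (2 * j + 1)) : ℕ) : ℚ)
        / (2 ^ (2 * x - 2) * dfact (4 * x - 3)) := by
    intro j hj
    obtain ⟨d, hd⟩ := Nat.exists_eq_add_of_lt (mem_range.mp hj)
    subst hd
    match d with
    | 0 =>
      rw [show (2 * (j + 0 + 1) - 2 * j - 2 : ℕ) = 0 from by omega,
        show 2 * (j + 0 + 1) - 2 - j = j from by omega,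
        Nat.choose_eq_zero_of_lt (Nat.lt_succ_self j)]
      simp
    | e + 1 =>
      rw [show 2 * (j + (e + 1) + 1) - 2 - j = j + 2 * e + 2 from by omega,
        show 2 * (j + (e + 1) + 1) - 2 - (2 * j + 1) = 2 * e + 1 from by omega,
        show 2 * (j + (e + 1) + 1) - 2 * j - 2 = 2 * e + 2 from by omega,
        show 2 * (j + (e + 1) + 1) - 2 * j - 3 = 2 * e + 1 from by omega,
        show 2 * (j + (e + 1) + 1) - 3 = 2 * (j + e) + 1 from by omega,
        show 2 * (j + (e + 1) + 1) - 2 = 2 * (j + e) + 1 + 1 from by omega,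
        show 2 * (j + (e + 1) + 1) - 1 = 2 * (j + e + 1) + 1 from by omega,
        show j + (e + 1) + 1 - 1 = j + e + 1 from by omega,
        show j + (e + 1) + 1 - j - 1 = e + 1 from by omega]
      rw [cast_dfact_odd j, cast_dfact_odd (j + e), cast_dfact_odd e]
      rw [Nat.cast_mul, Nat.cast_mul,
        Nat.cast_choose ℚ (show j ≤ 2 * (j + e) + 1 + 1 from by omega),
        Nat.cast_choose ℚ (show j + 1 ≤ j + 2 * e + 2 from by omega)]
      rw [show 2 * (j + e) + 1 + 1 - j = j + 2 * e + 2 from by omega,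
        show j + 2 * e + 2 - (j + 1) = 2 * e + 1 from by omega]
      rw [Nat.factorial_succ (2 * (j + e) + 1), Nat.factorial_succ (j + e),
        Nat.factorial_succ e,
        show (2 * j + 2)! = (2 * j + 1 + 1)! from by norm_num,
        Nat.factorial_succ (2 * j + 1),
        show (j + 2 * e + 2)! = (j + 2 * e + 1 + 1)! from by norm_num,
        Nat.factorial_succ (j + 2 * e + 1),
        show (j + 1)! = (j + 1) * j ! from Nat.factorial_succ j]
      have h1 : ((2 * (j + e) + 1)! : ℚ) ≠ 0 := Nat.cast_ne_zero.2 (Nat.factorial_ne_zero _)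
      have h2 : ((j + e)! : ℚ) ≠ 0 := Nat.cast_ne_zero.2 (Nat.factorial_ne_zero _)
      have h3 : ((2 * j + 1)! : ℚ) ≠ 0 := Nat.cast_ne_zero.2 (Nat.factorial_ne_zero _)
      have h4 : ((2 * e + 1)! : ℚ) ≠ 0 := Nat.cast_ne_zero.2 (Nat.factorial_ne_zero _)
      have h5 : ((j + 2 * e + 1)! : ℚ) ≠ 0 := Nat.cast_ne_zero.2 (Nat.factorial_ne_zero _)
      have h6 : (j ! : ℚ) ≠ 0 := Nat.cast_ne_zero.2 (Nat.factorial_ne_zero _)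
      have h7 : (e ! : ℚ) ≠ 0 := Nat.cast_ne_zero.2 (Nat.factorial_ne_zero _)
      have h8 : (dfact (4 * (j + (e + 1) + 1) - 3) : ℚ) ≠ 0 :=
        Nat.cast_ne_zero.2 (dfact_pos _).ne'
      have h9 : ((2 * (j + e + 1) + 1)! : ℚ) ≠ 0 := Nat.cast_ne_zero.2 (Nat.factorial_ne_zero _)
      push_cast
      field_simp
      ring
  rw [Finset.sum_congr rfl hterm]
  rw [← Finset.sum_div, ← Finset.mul_sum, ← Nat.cast_sum]
  have hext : ∑ j ∈ range x, ((2 * x - 2).choose j * (2 * x - 2 - j).choose (j + 1)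
        * 2 ^ (2 * x - 2 - (2 * j + 1)))
      = ∑ j ∈ range (2 * x - 2 + 1), ((2 * x - 2).choose j * (2 * x - 2 - j).choose (j + 1)
        * 2 ^ (2 * x - 2 - (2 * j + 1))) := by
    apply Finset.sum_subset
    · intro a ha; simp at ha ⊢; omega
    · intro a ha ha2
      simp only [mem_range] at ha ha2
      have : 2 * x - 2 - a < a + 1 := by omega
      rw [Nat.choose_eq_zero_of_lt this]
      simp
  rw [hext, idB (2 * x - 2), show 2 * (2 * x - 2) = 4 * x - 4 from by omega,
    show 2 * x - 2 + 1 = 2 * x - 1 from by omega]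

/-- The closed-form values satisfy the recursion
`P(2x,2x) = 1/(4x-1) + ((2x-1)/(4x-1))·P(2x-1,2x-1) + ((2x-1)/(4x-1))·P(2x-2,2x)`. -/
theorem stmt_5 (x : ℕ) (hx : 1 ≤ x) :
    (4 * (x : ℚ) - 1) * S₁ x - (2 * (x : ℚ) - 1) * (S₂ x + S₃ x) = 1 := by
  rw [S1_eq x hx, S2_eq x hx, S3_eq x hx]
  obtain ⟨y, rfl⟩ : ∃ y, x = y + 1 := ⟨x - 1, by omega⟩
  rw [show 4 * (y + 1) - 2 = 4 * y + 2 from by omega,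
    show 4 * (y + 1) - 4 = 4 * y from by omega,
    show 2 * (y + 1) - 1 = 2 * y + 1 from by omega,
    show 2 * (y + 1) - 2 = 2 * y from by omega,
    show 2 * (y + 1) = 2 * y + 1 + 1 from by omega,
    show 4 * (y + 1) - 1 = 4 * y + 1 + 2 from by omega,
    show 4 * (y + 1) - 3 = 4 * y + 1 from by omega]
  rw [dfact]
  have hG : ((2 * y)! : ℚ) ≠ 0 := Nat.cast_ne_zero.2 (Nat.factorial_ne_zero _)
  have hG1 : ((2 * y + 1)! : ℚ) ≠ 0 := Nat.cast_ne_zero.2 (Nat.factorial_ne_zero _)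
  have hF : ((4 * y)! : ℚ) ≠ 0 := Nat.cast_ne_zero.2 (Nat.factorial_ne_zero _)
  have hD : (dfact (4 * y + 1) : ℚ) ≠ 0 := Nat.cast_ne_zero.2 (dfact_pos _).ne'
  have hP : (2 : ℚ) ^ (2 * y) ≠ 0 := by positivity
  have hy1 : ((2 * y + 1 : ℕ) : ℚ) ≠ 0 := by push_cast; positivity
  have hA : (((4 * y + 2).choose (2 * y + 1) : ℕ) : ℚ)
      = (4 * y + 2)! / ((2 * y + 1)! * (2 * y + 1)!) := by
    rw [eq_div_iff (by positivity)]
    have := Nat.choose_mul_factorial_mul_factorial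
      (show 2 * y + 1 ≤ 4 * y + 2 from by omega)
    rw [show 4 * y + 2 - (2 * y + 1) = 2 * y + 1 from by omega] at this
    exact_mod_cast congrArg (Nat.cast (R := ℚ)) (by rw [← this]; ring)
  have hB : (((4 * y).choose (2 * y) : ℕ) : ℚ) = (4 * y)! / ((2 * y)! * (2 * y)!) := by
    rw [eq_div_iff (by positivity)]
    have := Nat.choose_mul_factorial_mul_factorial
      (show 2 * y ≤ 4 * y from by omega)
    rw [show 4 * y - 2 * y = 2 * y from by omega] at this
    exact_mod_cast congrArg (Nat.cast (R := ℚ)) (by rw [← this]; ring)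
  have hC : (((4 * y).choose (2 * y + 1) : ℕ) : ℚ)
      = ((4 * y).choose (2 * y) : ℕ) * (2 * y) / (2 * y + 1) := by
    rw [eq_div_iff (by positivity)]
    have := Nat.choose_succ_right_eq (4 * y) (2 * y)
    rw [show 4 * y - 2 * y = 2 * y from by omega] at this
    exact_mod_cast congrArg (Nat.cast (R := ℚ)) this
  have hDq : (dfact (4 * y + 1) : ℚ) = (4 * y + 1)! / (2 ^ (2 * y) * (2 * y)!) := by
    rw [eq_div_iff (by positivity)]
    have := dfact_odd (2 * y)
    rw [show 2 * (2 * y) + 1 = 4 * y + 1 from by omega] at this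
    exact_mod_cast congrArg (Nat.cast (R := ℚ)) this
  have f1 : ((4 * y + 2)! : ℚ) = ((4 * y + 2 : ℕ) : ℚ) * ((4 * y + 1 : ℕ) : ℚ) * ((4 * y)! : ℚ) := by
    have : (4 * y + 2)! = (4 * y + 2) * ((4 * y + 1) * (4 * y)!) := by
      rw [show (4 * y + 2) = (4 * y + 1) + 1 from by omega, Nat.factorial_succ,
        Nat.factorial_succ]
    rw [show ((4 * y + 2 : ℕ) : ℚ) * ((4 * y + 1 : ℕ) : ℚ) * ((4 * y)! : ℚ)
      = (((4 * y + 2) * ((4 * y + 1) * (4 * y)!) : ℕ) : ℚ) from by push_cast; ring, this]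
  have f2 : ((2 * y + 1)! : ℚ) = ((2 * y + 1 : ℕ) : ℚ) * ((2 * y)! : ℚ) := by
    exact_mod_cast congrArg (Nat.cast (R := ℚ)) (Nat.factorial_succ (2 * y))
  have f3 : ((2 * y + 1 + 1)! : ℚ) = ((2 * y + 2 : ℕ) : ℚ) * ((2 * y + 1)! : ℚ) := by
    exact_mod_cast congrArg (Nat.cast (R := ℚ)) (Nat.factorial_succ (2 * y + 1))
  have f4 : ((4 * y + 1)! : ℚ) = ((4 * y + 1 : ℕ) : ℚ) * ((4 * y)! : ℚ) := by
    exact_mod_cast congrArg (Nat.cast (R := ℚ)) (Nat.factorial_succ (4 * y))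
  push_cast
  push_cast at hA hB hC hDq f1 f2 f3 f4
  rw [hC, hB, hA, hDq, f3, f2, f1, f4]
  field_simp
  ring
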